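/- There exist finite loopless simple graphs A, B, C and graph homomorphisms f : A → B, g : A → C such that the pushout graph G of f and g satisfies χ(G) = 5 while the double mapping cylinder D_n of f and g has χ(D_n) = 4 for every n > 1. Hence the inequality χ(G) ≥ χ(D_n) can be strict. -/

import Mathlib

/-- A graph (possibly with loops) on vertex type `V`. -/
structure GraphL (V : Type) where
  Adj : V → V → Prop
  symm : ∀ {x y}, Adj x y → Adj y x

/-- A graph homomorphism. -/
structure GHom {V W : Type} (G : GraphL V) (H : GraphL W) where
  toFun : V → W
  map_adj : ∀ {x y}, G.Adj x y → H.Adj (toFun x) (toFun y)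

/-- The complete graph `K_k` as a `GraphL`. -/
def completeG (k : ℕ) : GraphL (Fin k) :=
  ⟨fun i j => i ≠ j, fun h => Ne.symm h⟩

/-- `Colorable G k` iff there is a homomorphism `G → K_k`. -/
def GraphL.Colorable {V : Type} (G : GraphL V) (k : ℕ) : Prop :=
  Nonempty (GHom G (completeG k))

/-- The chromatic number: least `k` admitting a proper colouring. -/
noncomputable def chromNum {V : Type} (G : GraphL V) : ℕ :=
  sInf {k | G.Colorable k}

/-- The categorical product `A × I_n`, where `I_n` is the looped path on `{0, …, n}`. -/
def GraphL.prodIn {V : Type} (A : GraphL V) (n : ℕ) : GraphL (V × Fin (n + 1)) :=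
  ⟨fun p q => A.Adj p.1 q.1 ∧ |(p.2 : ℤ) - (q.2 : ℤ)| ≤ 1, by
    rintro ⟨a, i⟩ ⟨b, j⟩ ⟨h1, h2⟩
    exact ⟨A.symm h1, by rwa [abs_sub_comm]⟩⟩

section Cyl
variable {VA VB VC : Type}

/-- Generating relation for the double mapping cylinder: `f a ∼ (a, n)` and `g a ∼ (a, 0)`. -/
def cylRel (f : VA → VB) (g : VA → VC) (n : ℕ) :
    (VB ⊕ (VA × Fin (n + 1)) ⊕ VC) → (VB ⊕ (VA × Fin (n + 1)) ⊕ VC) → Prop :=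
  fun x y =>
    (∃ a, x = Sum.inl (f a) ∧ y = Sum.inr (Sum.inl (a, Fin.last n))) ∨
    (∃ a, x = Sum.inr (Sum.inr (g a)) ∧ y = Sum.inr (Sum.inl (a, 0)))

/-- Vertices of the double mapping cylinder `D_n`. -/
def CylVert (f : VA → VB) (g : VA → VC) (n : ℕ) : Type :=
  Quot (cylRel f g n)

/-- Adjacency on the disjoint union `B ⊔ (A × I_n) ⊔ C`. -/
def cylBaseAdj (A : GraphL VA) (B : GraphL VB) (C : GraphL VC) (n : ℕ) :
    (VB ⊕ (VA × Fin (n + 1)) ⊕ VC) → (VB ⊕ (VA × Fin (n + 1)) ⊕ VC) → Prop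
  | Sum.inl b, Sum.inl b' => B.Adj b b'
  | Sum.inr (Sum.inl p), Sum.inr (Sum.inl q) => (A.prodIn n).Adj p q
  | Sum.inr (Sum.inr c), Sum.inr (Sum.inr c') => C.Adj c c'
  | _, _ => False

/-- The double mapping cylinder `D_n = B ⊔_f (A × I_n) ⊔_g C` of `f : A → B`, `g : A → C`. -/
def cylGraph (A : GraphL VA) (B : GraphL VB) (C : GraphL VC)
    (f : VA → VB) (g : VA → VC) (n : ℕ) : GraphL (CylVert f g n) :=
  ⟨fun x y => ∃ x₀ y₀, Quot.mk _ x₀ = x ∧ Quot.mk _ y₀ = y ∧ cylBaseAdj A B C n x₀ y₀, by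
    rintro x y ⟨x₀, y₀, hx, hy, h⟩
    refine ⟨y₀, x₀, hy, hx, ?_⟩
    rcases x₀ with b | p | c <;> rcases y₀ with b' | p' | c' <;>
      simp only [cylBaseAdj] at h ⊢
    · exact B.symm h
    · exact (A.prodIn n).symm h
    · exact C.symm h⟩

/-- Generating relation for the pushout: `f a ∼ g a`. -/
def pushRel (f : VA → VB) (g : VA → VC) : (VB ⊕ VC) → (VB ⊕ VC) → Prop :=
  fun x y => ∃ a, x = Sum.inl (f a) ∧ y = Sum.inr (g a)

/-- Vertices of the pushout graph. -/
def PushVert (f : VA → VB) (g : VA → VC) : Type := Quot (pushRel f g)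

def pushBaseAdj (B : GraphL VB) (C : GraphL VC) : (VB ⊕ VC) → (VB ⊕ VC) → Prop
  | Sum.inl b, Sum.inl b' => B.Adj b b'
  | Sum.inr c, Sum.inr c' => C.Adj c c'
  | _, _ => False

/-- The pushout graph `G = B ⊔_A C` of `f : A → B`, `g : A → C`. -/
def pushGraph (B : GraphL VB) (C : GraphL VC) (f : VA → VB) (g : VA → VC) :
    GraphL (PushVert f g) :=
  ⟨fun x y => ∃ x₀ y₀, Quot.mk _ x₀ = x ∧ Quot.mk _ y₀ = y ∧ pushBaseAdj B C x₀ y₀, by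
    rintro x y ⟨x₀, y₀, hx, hy, h⟩
    refine ⟨y₀, x₀, hy, hx, ?_⟩
    rcases x₀ with b | c <;> rcases y₀ with b' | c' <;> simp only [pushBaseAdj] at h ⊢
    · exact B.symm h
    · exact C.symm h⟩

end Cyl


/-! ### Auxiliary constructions for the witness example -/

namespace PushCylAux

/-- Build a symmetric graph from a list of edges (given as pairs of naturals). -/
def mkG {k : ℕ} (l : List (ℕ × ℕ)) : GraphL (Fin k) :=
  ⟨fun i j => (i.val, j.val) ∈ l ∨ (j.val, i.val) ∈ l, fun h => h.symm⟩

def lA : List (ℕ × ℕ) := [(0,3),(3,2),(2,1)]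
def lB : List (ℕ × ℕ) := [(0,3),(3,2),(2,1),(4,0),(4,1),(0,2),(3,1),(0,1)]
def lC : List (ℕ × ℕ) := [(0,3),(3,2),(2,1),(4,0),(4,1),(4,2),(4,3)]

instance {k : ℕ} {l : List (ℕ × ℕ)} (i j : Fin k) : Decidable ((mkG l).Adj i j) :=
  inferInstanceAs (Decidable ((i.val, j.val) ∈ l ∨ (j.val, i.val) ∈ l))

def GA : GraphL (Fin 4) := mkG lA
def GB : GraphL (Fin 5) := mkG lB
def GC : GraphL (Fin 5) := mkG lC

instance (i j : Fin 4) : Decidable (GA.Adj i j) := inferInstanceAs (Decidable ((mkG lA).Adj i j))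
instance (i j : Fin 5) : Decidable (GB.Adj i j) := inferInstanceAs (Decidable ((mkG lB).Adj i j))
instance (i j : Fin 5) : Decidable (GC.Adj i j) := inferInstanceAs (Decidable ((mkG lC).Adj i j))

/-- The common inclusion `Fin 4 → Fin 5`. -/
def inc : Fin 4 → Fin 5 := Fin.castSucc

lemma inc_adj_B : ∀ x y : Fin 4, GA.Adj x y → GB.Adj (inc x) (inc y) := by decide

lemma inc_adj_C : ∀ x y : Fin 4, GA.Adj x y → GC.Adj (inc x) (inc y) := by decide

def fHom : GHom GA GB := ⟨inc, fun {x y} h => inc_adj_B x y h⟩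
def gHom : GHom GA GC := ⟨inc, fun {x y} h => inc_adj_C x y h⟩

/-- Monotonicity of colorability. -/
lemma colorable_mono {V : Type} (G : GraphL V) {k m : ℕ} (hkm : k ≤ m)
    (h : G.Colorable k) : G.Colorable m := by
  obtain ⟨h⟩ := h
  exact ⟨⟨fun v => Fin.castLE hkm (h.toFun v), fun {x y} ha hEq =>
    h.map_adj ha (Fin.castLE_injective hkm hEq)⟩⟩

lemma chromNum_eq {V : Type} (G : GraphL V) {m : ℕ}
    (h1 : G.Colorable (m + 1)) (h2 : ¬ G.Colorable m) : chromNum G = m + 1 := by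
  refine le_antisymm (Nat.sInf_le h1) (le_csInf ⟨m + 1, h1⟩ ?_)
  intro k hk
  by_contra hkm
  exact h2 (colorable_mono G (by omega) hk)

/-! #### Pushout: colorable with 5 colors -/

def cPush : Fin 5 ⊕ Fin 5 → Fin 5 := Sum.elim ![0,1,2,3,2] ![0,1,2,3,4]

lemma cPush_rel : ∀ a : Fin 4, cPush (Sum.inl (inc a)) = cPush (Sum.inr (inc a)) := by decide

lemma cPush_B : ∀ b b' : Fin 5, GB.Adj b b' → cPush (Sum.inl b) ≠ cPush (Sum.inl b') := by decide

lemma cPush_C : ∀ c c' : Fin 5, GC.Adj c c' → cPush (Sum.inr c) ≠ cPush (Sum.inr c') := by decide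

lemma push_col5 : (pushGraph GB GC inc inc).Colorable 5 := by
  refine ⟨⟨Quot.lift cPush ?_, ?_⟩⟩
  · rintro x y ⟨a, rfl, rfl⟩
    exact cPush_rel a
  · rintro x y ⟨x₀, y₀, rfl, rfl, h⟩
    show cPush x₀ ≠ cPush y₀
    rcases x₀ with b | c <;> rcases y₀ with b' | c' <;>
      first
      | exact cPush_B _ _ h
      | exact cPush_C _ _ h
      | exact (h : False).elim

/-! #### Pushout: not colorable with 4 colors -/

lemma push_not4 : ¬ (pushGraph GB GC inc inc).Colorable 4 := by
  rintro ⟨h⟩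
  set c : Fin 5 ⊕ Fin 5 → Fin 4 := fun x => h.toFun (Quot.mk _ x) with hc
  have he : ∀ a : Fin 4, c (Sum.inl (inc a)) = c (Sum.inr (inc a)) :=
    fun a => congrArg h.toFun (Quot.sound ⟨a, rfl, rfl⟩)
  have he' : ∀ a : Fin 5, a.val < 4 → c (Sum.inl a) = c (Sum.inr a) := by
    intro a ha
    have h2 : a = inc ⟨a.val, ha⟩ := Fin.ext rfl
    rw [h2]; exact he _
  have hB : ∀ b b' : Fin 5, GB.Adj b b' → c (Sum.inl b) ≠ c (Sum.inl b') :=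
    fun b b' hb => h.map_adj ⟨Sum.inl b, Sum.inl b', rfl, rfl, hb⟩
  have hC : ∀ d d' : Fin 5, GC.Adj d d' → c (Sum.inr d) ≠ c (Sum.inr d') :=
    fun d d' hd => h.map_adj ⟨Sum.inr d, Sum.inr d', rfl, rfl, hd⟩
  have hinj : Function.Injective (fun k : Fin 5 => c (Sum.inr k)) := by
    intro k l hkl
    simp only at hkl
    by_contra hne
    fin_cases k <;> fin_cases l <;>
      first
      | exact hne rfl
      | exact hC _ _ (by decide) hkl
      | exact hC _ _ (by decide) hkl.symm
      | exact hB _ _ (by decide)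
          (((he' _ (by decide)).trans (hkl.trans (he' _ (by decide)).symm)))
      | exact hB _ _ (by decide)
          (((he' _ (by decide)).trans (hkl.symm.trans (he' _ (by decide)).symm)))
  have := Fintype.card_le_of_injective _ hinj
  simp at this

/-! #### Pushout: loopless -/

def invP : Fin 5 ⊕ Fin 5 → ℕ
  | Sum.inl b => b.val
  | Sum.inr c => if c.val < 4 then c.val else 5

lemma invP_rel : ∀ x y, pushRel inc inc x y → invP x = invP y := by
  rintro x y ⟨a, rfl, rfl⟩
  revert a; decide

lemma invP_adj : ∀ x y, invP x = invP y → ¬ pushBaseAdj GB GC x y := by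
  rintro (b | c) (b' | c') h <;> simp only [pushBaseAdj] <;>
    first
    | exact fun hh => False.elim hh
    | revert h; revert b' b; decide
    | revert h; revert c' c; decide

lemma push_loopless : ∀ v, ¬ (pushGraph GB GC inc inc).Adj v v := by
  rintro v ⟨x₀, y₀, hx, hy, h⟩
  have hmk : Quot.mk _ x₀ = Quot.mk _ y₀ := hx.trans hy.symm
  have hinv : invP x₀ = invP y₀ := congrArg (Quot.lift invP invP_rel) hmk
  exact invP_adj _ _ hinv h

/-! #### Cylinder: colorable with 4 colors (for `n ≥ 1`) -/

def colB4 : Fin 5 → Fin 4 := ![0,1,2,3,2]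
def colC4 : Fin 5 → Fin 4 := ![1,1,2,3,0]

def colM (n : ℕ) : Fin 4 × Fin (n + 1) → Fin 4 :=
  fun p => if p.1 = 0 then (if (p.2 : ℕ) = n then 0 else 1) else p.1

def cCyl (n : ℕ) : (Fin 5 ⊕ (Fin 4 × Fin (n + 1)) ⊕ Fin 5) → Fin 4 :=
  Sum.elim colB4 (Sum.elim (colM n) colC4)

lemma colM_last (n : ℕ) (a : Fin 4) : colM n (a, Fin.last n) = ![0,1,2,3] a := by
  fin_cases a <;> simp [colM, Fin.last]

lemma colM_zero {n : ℕ} (hn : 1 ≤ n) (a : Fin 4) : colM n (a, 0) = ![1,1,2,3] a := by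
  fin_cases a <;> simp [colM] <;> exact if_neg (by omega)

lemma colB4_inc : ∀ a : Fin 4, colB4 (inc a) = ![0,1,2,3] a := by decide
lemma colC4_inc : ∀ a : Fin 4, colC4 (inc a) = ![1,1,2,3] a := by decide

lemma cCyl_rel {n : ℕ} (hn : 1 ≤ n) :
    ∀ x y, cylRel inc inc n x y → cCyl n x = cCyl n y := by
  rintro x y (⟨a, rfl, rfl⟩ | ⟨a, rfl, rfl⟩)
  · show colB4 (inc a) = colM n (a, Fin.last n)
    rw [colB4_inc, colM_last]
  · show colC4 (inc a) = colM n (a, 0)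
    rw [colC4_inc, colM_zero hn]

lemma cCyl_B : ∀ b b' : Fin 5, GB.Adj b b' → colB4 b ≠ colB4 b' := by decide
lemma cCyl_C : ∀ c c' : Fin 5, GC.Adj c c' → colC4 c ≠ colC4 c' := by decide

lemma colM_cases (n : ℕ) (u : Fin 4) (i : Fin (n + 1)) :
    colM n (u, i) = u ∨ (u = 0 ∧ colM n (u, i) = 1) := by
  unfold colM
  by_cases h : u = 0
  · rw [if_pos h]
    by_cases h2 : (i : ℕ) = n
    · rw [if_pos h2]; exact Or.inl h.symm
    · rw [if_neg h2]; exact Or.inr ⟨h, rfl⟩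
  · rw [if_neg h]; exact Or.inl rfl

lemma GA_adj_ne : ∀ u v : Fin 4, GA.Adj u v → u ≠ v := by decide
lemma GA_adj_zero : ∀ u : Fin 4, GA.Adj u 0 → u = 3 := by decide
lemma GA_adj_zero' : ∀ v : Fin 4, GA.Adj 0 v → v = 3 := by decide

lemma cCyl_M {n : ℕ} : ∀ p q : Fin 4 × Fin (n + 1),
    (GA.prodIn n).Adj p q → colM n p ≠ colM n q := by
  rintro ⟨u, i⟩ ⟨v, j⟩ ⟨hadj, -⟩
  simp only at hadj
  rcases colM_cases n u i with h1 | ⟨hu, h1⟩ <;>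
    rcases colM_cases n v j with h2 | ⟨hv, h2⟩ <;> rw [h1, h2]
  · exact GA_adj_ne u v hadj
  · subst hv
    rw [GA_adj_zero u hadj]
    exact (by decide : (3 : Fin 4) ≠ 1)
  · subst hu
    rw [GA_adj_zero' v hadj]
    exact (by decide : (1 : Fin 4) ≠ 3)
  · subst hu; subst hv
    exact absurd hadj (by decide)

lemma cyl_col4 {n : ℕ} (hn : 1 ≤ n) : (cylGraph GA GB GC inc inc n).Colorable 4 := by
  refine ⟨⟨Quot.lift (cCyl n) (cCyl_rel hn), ?_⟩⟩
  rintro x y ⟨x₀, y₀, rfl, rfl, h⟩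
  show cCyl n x₀ ≠ cCyl n y₀
  rcases x₀ with b | p | c <;> rcases y₀ with b' | p' | c' <;>
    simp only [cylBaseAdj] at h
  · exact cCyl_B _ _ h
  · exact cCyl_M _ _ h
  · exact cCyl_C _ _ h

/-! #### Cylinder: not colorable with 3 colors -/

lemma incK4 : ∀ k l : Fin 4, k ≠ l → GB.Adj (inc k) (inc l) := by decide

lemma cyl_not3 (n : ℕ) : ¬ (cylGraph GA GB GC inc inc n).Colorable 3 := by
  rintro ⟨h⟩
  have hinj : Function.Injective
      (fun k : Fin 4 => h.toFun (Quot.mk _ (Sum.inl (inc k)))) := by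
    intro k l hkl
    simp only at hkl
    by_contra hne
    exact h.map_adj ⟨Sum.inl (inc k), Sum.inl (inc l), rfl, rfl, incK4 k l hne⟩ hkl
  have := Fintype.card_le_of_injective _ hinj
  simp at this

lemma GA_loopless : ∀ v, ¬ GA.Adj v v := by decide
lemma GB_loopless : ∀ v, ¬ GB.Adj v v := by decide
lemma GC_loopless : ∀ v, ¬ GC.Adj v v := by decide

end PushCylAux

/-- There are finite loopless simple graphs `A, B, C` and homomorphisms
`f : A → B`, `g : A → C` whose pushout `G` has chromatic number 5, while every double
mapping cylinder `D_n` with `n > 1` has chromatic number 4.  So `χ(G) ≥ χ(D_n)` can be strict. -/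
theorem exists_pushout_chromatic_gt_cylinder :
    ∃ (VA VB VC : Type) (_ : Fintype VA) (_ : Fintype VB) (_ : Fintype VC)
      (A : GraphL VA) (B : GraphL VB) (C : GraphL VC)
      (f : GHom A B) (g : GHom A C),
      (∀ v, ¬ A.Adj v v) ∧ (∀ v, ¬ B.Adj v v) ∧ (∀ v, ¬ C.Adj v v) ∧
      (∀ v, ¬ (pushGraph B C f.toFun g.toFun).Adj v v) ∧
      chromNum (pushGraph B C f.toFun g.toFun) = 5 ∧
      ∀ n : ℕ, 1 < n → chromNum (cylGraph A B C f.toFun g.toFun n) = 4 := by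
  
  classical
  refine ⟨Fin 4, Fin 5, Fin 5, inferInstance, inferInstance, inferInstance,
    PushCylAux.GA, PushCylAux.GB, PushCylAux.GC, PushCylAux.fHom, PushCylAux.gHom,
    PushCylAux.GA_loopless, PushCylAux.GB_loopless, PushCylAux.GC_loopless,
    PushCylAux.push_loopless, ?_, ?_⟩
  · exact PushCylAux.chromNum_eq _ PushCylAux.push_col5 PushCylAux.push_not4
  · intro n hn
    exact PushCylAux.chromNum_eq _ (PushCylAux.cyl_col4 (by omega)) (PushCylAux.cyl_not3 n)
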